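/- A parallelogram law with directional continuity yields a seminorm and a semi-inner product. Let X be a vector space over ℂ and p : X → [0, +∞) a function such that: (i) p(λx) = |λ|·p(x) for every λ ∈ ℂ and x ∈ X; (ii) p(x+y)² + p(x−y)² = 2(p(x)² + p(y)²) for all x, y ∈ X; (iii) for every fixed x, y ∈ X, p(x + t·y) → p(x) as the real parameter t → 0⁺. Then p is a seminorm on X (in particular p(x+y) ≤ p(x) + p(y) for all x, y), and the map B(x, y) := (1/4)·∑_{k=0}^{3} (−i)^k · p(x + i^k y)² is a positive semidefinite Hermitian sesquilinear form on X: B(x, x) = p(x)² ≥ 0, B(x, y) = conj(B(y, x)), B(x, y+z) = B(x, y) + B(x, z), and B(x, λy) = λ·B(x, y) for all x, y, z ∈ X and λ ∈ ℂ; moreover B is the unique positive semidefinite Hermitian sesquilinear form with B(x, x) = p(x)² for all x. -/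

import Mathlib

open Filter Topology

/-- The candidate semi-inner product obtained from `p` by the polarization formula
`B(x, y) = (1/4)·∑_{k=0}^{3} (−i)^k · p(x + i^k y)²`. -/
noncomputable def polarForm {X : Type*} [AddCommGroup X] [Module ℂ X]
    (p : X → ℝ) (x y : X) : ℂ :=
  (1 / 4 : ℂ) * ∑ k ∈ Finset.range 4,
    (-Complex.I) ^ k * ((p (x + (Complex.I ^ k) • y) : ℂ)) ^ 2

/-- **A parallelogram law with directional continuity yields a seminorm and a semi-inner
product.** If `p : X → [0,∞)` is absolutely homogeneous, satisfies the parallelogram law and is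
directionally continuous, then `p` is subadditive (hence a seminorm) and the polarization
formula defines the unique positive semidefinite Hermitian sesquilinear form `B` with
`B(x,x) = p(x)²`. -/
theorem seminorm_and_semi_inner_product_of_parallelogram
    {X : Type*} [AddCommGroup X] [Module ℂ X]
    (p : X → ℝ) (hp0 : ∀ x, 0 ≤ p x)
    (hhom : ∀ (z : ℂ) (x : X), p (z • x) = ‖z‖ * p x)
    (hpar : ∀ x y : X, p (x + y) ^ 2 + p (x - y) ^ 2 = 2 * (p x ^ 2 + p y ^ 2))
    (hcont : ∀ x y : X, Filter.Tendsto (fun t : ℝ => p (x + (t : ℂ) • y))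
      (nhdsWithin 0 (Set.Ioi 0)) (nhds (p x))) :
    (∀ x y : X, p (x + y) ≤ p x + p y) ∧
    (∀ x : X, polarForm p x x = (p x : ℂ) ^ 2) ∧
    (∀ x y : X, polarForm p x y = starRingEnd ℂ (polarForm p y x)) ∧
    (∀ x y z : X, polarForm p x (y + z) = polarForm p x y + polarForm p x z) ∧
    (∀ (l : ℂ) (x y : X), polarForm p x (l • y) = l * polarForm p x y) ∧
    (∀ B' : X → X → ℂ,
      (∀ x, B' x x = (p x : ℂ) ^ 2) →
      (∀ x y, B' x y = starRingEnd ℂ (B' y x)) →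
      (∀ x y z, B' x (y + z) = B' x y + B' x z) →
      (∀ (l : ℂ) (x y), B' x (l • y) = l * B' x y) →
      B' = polarForm p) := by
  have hI2 : Complex.I ^ 2 = -1 := Complex.I_sq
  have hI3 : Complex.I ^ 3 = -Complex.I := by rw [pow_succ, hI2]; ring
  have p0 : p 0 = 0 := by simpa using hhom 0 0
  have pneg : ∀ x : X, p (-x) = p x := fun x => by simpa using hhom (-1) x
  have pI : ∀ x : X, p (Complex.I • x) = p x := fun x => by
    simpa using hhom Complex.I x
  -- the real bilinear form
  set re : X → X → ℝ := fun x y => (p (x + y) ^ 2 - p (x - y) ^ 2) / 4 with hre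
  -- additivity of `re` in the second variable (Jordan–von Neumann)
  have re_add : ∀ x y z : X, re x (y + z) = re x y + re x z := by
    intro x y z
    have hA : ∀ u v : X,
        (p (x + (u + v)) ^ 2 - p (x - (u + v)) ^ 2)
          + (p (x + (u - v)) ^ 2 - p (x - (u - v)) ^ 2)
          = 2 * (p (x + u) ^ 2 - p (x - u) ^ 2) := by
      intro u v
      have h1 := hpar (x + u) v
      have h2 := hpar (x - u) v
      have e1 : x + (u + v) = x + u + v := by abel
      have e2 : x - (u + v) = x - u - v := by abel
      have e3 : x + (u - v) = x + u - v := by abel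
      have e4 : x - (u - v) = x - u + v := by abel
      rw [e1, e2, e3, e4]; linarith
    have h1 := hA ((2⁻¹ : ℂ) • (y + z)) ((2⁻¹ : ℂ) • (y - z))
    have h2 := hA ((2⁻¹ : ℂ) • (y + z)) ((2⁻¹ : ℂ) • (y + z))
    have e1 : (2⁻¹ : ℂ) • (y + z) + (2⁻¹ : ℂ) • (y - z) = y := by module
    have e2 : (2⁻¹ : ℂ) • (y + z) - (2⁻¹ : ℂ) • (y - z) = z := by module
    have e3 : (2⁻¹ : ℂ) • (y + z) + (2⁻¹ : ℂ) • (y + z) = y + z := by module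
    have e4 : (2⁻¹ : ℂ) • (y + z) - (2⁻¹ : ℂ) • (y + z) = 0 := sub_self _
    rw [e1, e2] at h1
    rw [e3, e4, add_zero, sub_zero] at h2
    simp only [hre]
    linarith
  have qadd : ∀ u v : X, p (u + v) ^ 2 = p u ^ 2 + p v ^ 2 + 2 * re u v := by
    intro u v
    have h := hpar u v
    simp only [hre]
    linarith
  have re_symm : ∀ x y : X, re x y = re y x := by
    intro x y
    simp only [hre]
    rw [add_comm x y, show x - y = -(y - x) by abel, pneg]
  have re_neg : ∀ x y : X, re x (-y) = - re x y := by
    intro x y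
    simp only [hre]
    rw [show x + -y = x - y by abel, show x - -y = x + y by abel]
    ring
  have re_I_skew : ∀ x y : X, re y (Complex.I • x) = - re x (Complex.I • y) := by
    intro x y
    have e1 : y + Complex.I • x = Complex.I • (x - Complex.I • y) := by
      rw [smul_sub, smul_smul, Complex.I_mul_I, neg_one_smul]; abel
    have e2 : y - Complex.I • x = -(Complex.I • (x + Complex.I • y)) := by
      rw [smul_add, smul_smul, Complex.I_mul_I, neg_one_smul]; abel
    simp only [hre]
    rw [e1, e2, pI, pneg, pI]
    ring
  have re_II : ∀ x y : X, re x (Complex.I • Complex.I • y) = - re x y := by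
    intro x y
    rw [smul_smul, Complex.I_mul_I, neg_one_smul, re_neg]
  -- two-sided directional continuity
  have pcont : ∀ x y : X, Filter.Tendsto (fun t : ℝ => p (x + (t : ℂ) • y))
      (𝓝 0) (𝓝 (p x)) := by
    intro x y
    rw [← nhdsLT_sup_nhdsGE (0 : ℝ), Filter.tendsto_sup]
    constructor
    · have hneg : Filter.Tendsto (fun t : ℝ => -t) (𝓝[<] (0:ℝ)) (𝓝[>] (0:ℝ)) := by
        refine tendsto_nhdsWithin_of_tendsto_nhds_of_eventually_within _ ?_ ?_
        · simpa using (continuous_neg.tendsto (0:ℝ)).mono_left nhdsWithin_le_nhds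
        · filter_upwards [self_mem_nhdsWithin] with t ht
          exact neg_pos.mpr (Set.mem_Iio.mp ht)
      have h := (hcont x (-y)).comp hneg
      refine h.congr fun t => ?_
      show p (x + ((-t : ℝ) : ℂ) • (-y)) = p (x + (t : ℂ) • y)
      push_cast
      rw [neg_smul, smul_neg, neg_neg]
    · rw [show (𝓝[Set.Ici (0:ℝ)] 0) = pure 0 ⊔ 𝓝[>] (0:ℝ) by
        rw [← Set.Ioi_insert, nhdsWithin_insert], Filter.tendsto_sup]
      constructor
      · have h0 : p (x + ((0:ℝ) : ℂ) • y) = p x := by simp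
        simpa [h0] using tendsto_pure_nhds (fun t : ℝ => p (x + (t : ℂ) • y)) 0
      · exact hcont x y
  -- real homogeneity of `re` in the second variable
  have re_smul : ∀ (x y : X) (t : ℝ), re x ((t : ℂ) • y) = t * re x y := by
    intro x y t
    set F : ℝ →+ ℝ := AddMonoidHom.mk' (fun t => re x ((t : ℂ) • y)) (fun a b => by
      show re x (((a + b : ℝ) : ℂ) • y) = re x ((a : ℂ) • y) + re x ((b : ℂ) • y)
      rw [Complex.ofReal_add, add_smul]
      exact re_add x _ _) with hF
    have hF0 : F 0 = 0 := by simp [hF, hre]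
    have hFc : Continuous F := by
      apply continuous_of_continuousAt_zero F
      have h1 := (pcont x y).pow 2
      have h2 := (pcont x (-y)).pow 2
      have h := ((h1.sub h2).div_const 4)
      unfold ContinuousAt
      rw [hF0]
      have h0 : ((p x ^ 2 - p x ^ 2) / 4 : ℝ) = 0 := by ring
      rw [h0] at h
      have heq : (fun t : ℝ => (p (x + (t : ℂ) • y) ^ 2 - p (x + (t : ℂ) • (-y)) ^ 2) / 4)
          = ⇑F := by
        funext t
        simp only [hF, AddMonoidHom.mk'_apply, hre, smul_neg, sub_eq_add_neg]
      exact heq ▸ h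
    have hlin := (F.toRealLinearMap hFc).map_smul t 1
    simp only [AddMonoidHom.coe_toRealLinearMap, smul_eq_mul, mul_one] at hlin
    have h1 : F 1 = re x y := by simp [hF]
    rw [show re x ((t:ℂ) • y) = F t from rfl, hlin, h1]
  -- the polarization form in terms of `re`
  have polar_eq : ∀ x y : X, polarForm p x y
      = ((re x y : ℝ) : ℂ) - Complex.I * ((re x (Complex.I • y) : ℝ) : ℂ) := by
    intro x y
    simp only [polarForm, Finset.sum_range_succ, Finset.sum_range_zero, pow_zero, pow_one,
      hI2, hI3, neg_neg, one_smul, neg_one_smul, neg_smul, hre]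
    rw [show x + -y = x - y by abel, show x + -(Complex.I • y) = x - Complex.I • y by abel]
    have hn : (-Complex.I) ^ 2 = -1 := by rw [neg_pow, hI2]; ring
    have hn3 : (-Complex.I) ^ 3 = Complex.I := by rw [pow_succ, hn]; ring
    rw [hn, hn3]
    push_cast
    ring
  -- building blocks for the stated goals
  have polar_self : ∀ x : X, polarForm p x x = (p x : ℂ) ^ 2 := by
    intro x
    rw [polar_eq]
    have h1 : re x x = p x ^ 2 := by
      have e : x + x = (2 : ℂ) • x := (two_smul ℂ x).symm
      have habs2 : ‖(2 : ℂ)‖ = 2 := by norm_num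
      simp only [hre, e, sub_self, p0, hhom, habs2]
      ring
    have h2 : re x (Complex.I • x) = 0 := by
      have e1 : x + Complex.I • x = (1 + Complex.I) • x := by
        rw [add_smul, one_smul]
      have e2 : x - Complex.I • x = (1 - Complex.I) • x := by
        rw [sub_smul, one_smul]
      have a1 : ‖1 + Complex.I‖ ^ 2 = 2 := by
        rw [Complex.sq_norm]; norm_num [Complex.normSq_apply]
      have a2 : ‖1 - Complex.I‖ ^ 2 = 2 := by
        rw [Complex.sq_norm]; norm_num [Complex.normSq_apply]
      simp only [hre, e1, e2, hhom, mul_pow, a1, a2]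
      ring
    rw [h1, h2]
    push_cast
    ring
  have polar_add : ∀ x y z : X, polarForm p x (y + z) = polarForm p x y + polarForm p x z := by
    intro x y z
    rw [polar_eq, polar_eq, polar_eq, re_add, smul_add, re_add]
    push_cast
    ring
  have polar_conj : ∀ x y : X, polarForm p x y = starRingEnd ℂ (polarForm p y x) := by
    intro x y
    rw [polar_eq, polar_eq, re_symm y x, re_I_skew x y]
    rw [map_sub, map_mul, Complex.conj_I, Complex.conj_ofReal, Complex.conj_ofReal]
    push_cast
    ring_nf
  have polar_I : ∀ x y : X, polarForm p x (Complex.I • y) = Complex.I * polarForm p x y := by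
    intro x y
    rw [polar_eq, polar_eq, re_II]
    push_cast
    ring_nf
    rw [hI2]
    ring
  have polar_smul : ∀ (l : ℂ) (x y : X), polarForm p x (l • y) = l * polarForm p x y := by
    intro l x y
    have polar_rsmul : ∀ (t : ℝ) (x y : X),
        polarForm p x ((t : ℂ) • y) = (t : ℂ) * polarForm p x y := by
      intro t x y
      rw [polar_eq, polar_eq, re_smul]
      have : Complex.I • (t : ℂ) • y = (t : ℂ) • Complex.I • y := smul_comm _ _ _
      rw [this, re_smul]
      push_cast
      ring
    have hl : l • y = ((l.re : ℝ) : ℂ) • y + ((l.im : ℝ) : ℂ) • (Complex.I • y) := by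
      rw [smul_smul]
      rw [← add_smul]
      congr 1
      simp [Complex.ext_iff]
    rw [hl, polar_add, polar_rsmul, polar_rsmul, polar_I]
    conv_rhs => rw [← Complex.re_add_im l]
    ring
  -- subadditivity via Cauchy–Schwarz
  have subadd : ∀ x y : X, p (x + y) ≤ p x + p y := by
    intro x y
    have hCS : re x y ≤ p x * p y := by
      have hquad : ∀ t : ℝ, 0 ≤ p y ^ 2 * (t * t) + (2 * re x y) * t + p x ^ 2 := by
        intro t
        have h := qadd x ((t : ℂ) • y)
        have hsm : p ((t : ℂ) • y) ^ 2 = t ^ 2 * p y ^ 2 := by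
          rw [hhom, mul_pow, Complex.norm_real, Real.norm_eq_abs, sq_abs]
        have hr := re_smul x y t
        nlinarith [hp0 (x + (t : ℂ) • y), sq_nonneg (p (x + (t:ℂ) • y))]
      have hd := discrim_le_zero hquad
      rw [discrim] at hd
      nlinarith [mul_nonneg (hp0 x) (hp0 y)]
    have h := qadd x y
    nlinarith [hp0 (x + y), hp0 x, hp0 y]
  refine ⟨subadd, polar_self, polar_conj, polar_add, polar_smul, ?_⟩
  -- uniqueness
  intro B' h1 h2 h3 h4
  funext x y
  have haddl : ∀ u v w : X, B' (u + v) w = B' u w + B' v w := by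
    intro u v w
    rw [h2, h3, map_add, ← h2, ← h2]
  have key : ∀ z w : X, B' (z + w) (z + w)
      = B' z z + B' z w + (starRingEnd ℂ) (B' z w) + B' w w := by
    intro z w
    rw [h3, haddl, haddl, h2 w z]
    ring
  have habs : ∀ k : ℕ, (p ((Complex.I ^ k) • y) : ℂ) ^ 2 = (p y : ℂ) ^ 2 := by
    intro k
    rw [hhom]
    simp
  have hterm : ∀ k : ℕ, ((p (x + (Complex.I ^ k) • y) : ℂ)) ^ 2
      = B' x x + Complex.I ^ k * B' x y
        + (starRingEnd ℂ) (Complex.I ^ k * B' x y) + (p y : ℂ) ^ 2 := by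
    intro k
    rw [← h1, key, h4, h1 ((Complex.I ^ k) • y), habs]
  have hconj : ∀ k : ℕ, (starRingEnd ℂ) (Complex.I ^ k * B' x y)
      = (-Complex.I) ^ k * (starRingEnd ℂ) (B' x y) := by
    intro k
    rw [map_mul, map_pow, Complex.conj_I]
  simp only [polarForm, Finset.sum_range_succ, Finset.sum_range_zero, hterm, hconj]
  simp only [pow_zero, pow_one, hI2, hI3]
  have hn : (-Complex.I) ^ 2 = -1 := by rw [neg_pow, hI2]; ring
  have hn3 : (-Complex.I) ^ 3 = Complex.I := by rw [pow_succ, hn]; ring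
  rw [hn, hn3]
  ring_nf
  rw [hI2]
  ring
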